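/- The set Int(n) of interval partitions is exactly the set of maximal elements of the poset (NC(n), ≪). -/
import Mathlib


open Finset

/-- Partitions of `{1,...,n}`, modelled as finpartitions of `Fin n`. -/
abbrev NCPart (n : ℕ) := Finpartition (Finset.univ : Finset (Fin n))

/-- `i` and `j` lie in the same block of `π`. -/
def SameBlock {n : ℕ} (π : NCPart n) (i j : Fin n) : Prop :=
  ∃ B ∈ π.parts, i ∈ B ∧ j ∈ B

/-- `π` is a non-crossing partition. -/
def IsNoncrossing {n : ℕ} (π : NCPart n) : Prop :=
  ∀ i1 i2 i3 i4 : Fin n, i1 < i2 → i2 < i3 → i3 < i4 →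
    SameBlock π i1 i3 → SameBlock π i2 i4 → SameBlock π i1 i2

/-- `π` is an interval partition: every block is an integer interval. -/
def IsIntervalPart {n : ℕ} (π : NCPart n) : Prop :=
  ∀ B ∈ π.parts, ∃ i j : Fin n, i ≤ j ∧ B = Finset.Icc i j

/-- The nesting order: `V ⊑ W` iff `min W ≤ min V` and `max V ≤ max W`. -/
def Nested {n : ℕ} (V W : Finset (Fin n)) : Prop :=
  W.min ≤ V.min ∧ V.max ≤ W.max

def StrictNested {n : ℕ} (V W : Finset (Fin n)) : Prop :=
  Nested V W ∧ V ≠ W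

/-- An outer block: a block maximal with respect to the nesting order. -/
def IsOuter {n : ℕ} (π : NCPart n) (W : Finset (Fin n)) : Prop :=
  W ∈ π.parts ∧ ∀ V ∈ π.parts, Nested W V → V = W

/-- `P` is the parent block of `V` in `π`. -/
def IsParent {n : ℕ} (π : NCPart n) (V P : Finset (Fin n)) : Prop :=
  P ∈ π.parts ∧ StrictNested V P ∧
    ¬ ∃ V' ∈ π.parts, StrictNested V V' ∧ StrictNested V' P

/-- `π` refines `ρ`: every block of `ρ` is a union of blocks of `π`. -/
def Refines {n : ℕ} (π ρ : NCPart n) : Prop :=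
  ∀ B ∈ π.parts, ∃ C ∈ ρ.parts, B ⊆ C

/-- The partial order `π ≪ ρ`. -/
def LL {n : ℕ} (π ρ : NCPart n) : Prop :=
  Refines π ρ ∧ ∀ W ∈ ρ.parts, ∃ V ∈ π.parts, V ⊆ W ∧ V.min = W.min ∧ V.max = W.max

/-- The colouring `c` is constant on every block of `π`. -/
def MonoChrome {n s : ℕ} (c : Fin n → Fin s) (π : NCPart n) : Prop :=
  ∀ B ∈ π.parts, ∀ i ∈ B, ∀ j ∈ B, c i = c j

/-- Vertical no-repeat property: every inner block has colour different from its parent. -/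
def VNRP {n s : ℕ} (c : Fin n → Fin s) (π : NCPart n) : Prop :=
  ∀ V P : Finset (Fin n), V ∈ π.parts → IsParent π V P →
    ∀ i ∈ V, ∀ j ∈ P, c i ≠ c j

/-- The depth of (the block of) `j` in `π`: the number of blocks strictly nesting it. -/
noncomputable def blockDepth {n : ℕ} (π : NCPart n) (j : Fin n) : ℕ :=
  Set.ncard {W : Finset (Fin n) | W ∈ π.parts ∧ ∃ B ∈ π.parts, j ∈ B ∧ StrictNested B W}

/-- `j` is the maximum of an outer block of `π`. -/
def IsOuterMax {n : ℕ} (π : NCPart n) (j : Fin n) : Prop :=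
  ∃ B, IsOuter π B ∧ j ∈ B ∧ ∀ i ∈ B, i ≤ j

/-- `j` is the minimum of an outer block of `π`. -/
def IsOuterMin {n : ℕ} (π : NCPart n) (j : Fin n) : Prop :=
  ∃ B, IsOuter π B ∧ j ∈ B ∧ ∀ i ∈ B, j ≤ i

/-- Anticommutator-friendly partitions of `{1,...,2n}` (0-indexed: odd numbers
`1,3,...,2n-1` correspond to even indices, and `2n` to index `2n-1`). -/
def ACFriendly (n : ℕ) (π : NCPart (2*n)) : Prop :=
  (∀ j : Fin (2*n), IsOuterMax π j → Even (j : ℕ) ∨ (j : ℕ) = 2*n - 1) ∧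
  (∀ j j' : Fin (2*n), Even (j : ℕ) → (j' : ℕ) = (j : ℕ) + 1 → ¬ IsOuterMax π j →
    blockDepth π j ≠ blockDepth π j')

/-- A pairing: every block has exactly two elements. -/
def IsPairing {n : ℕ} (π : NCPart n) : Prop :=
  ∀ B ∈ π.parts, B.card = 2

/-- A block-projection for `π`. -/
structure BlockProjection {n : ℕ} (π : NCPart n) where
  toFun : {B : Finset (Fin n) // B ∈ π.parts} → {B : Finset (Fin n) // B ∈ π.parts}
  idem : ∀ A, toFun (toFun A) = toFun A
  mono : ∀ A B, Nested A.val B.val → Nested (toFun A).val (toFun B).val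
  le_apply : ∀ A, Nested A.val (toFun A).val

section Aux

variable {n : ℕ}

/-- The interval spanned by a finset. -/
def Ival (W : Finset (Fin n)) : Finset (Fin n) :=
  Finset.univ.filter (fun i => W.min ≤ (i : Fin n) ∧ (i : WithBot (Fin n)) ≤ W.max)

lemma mem_Ival {W : Finset (Fin n)} {i : Fin n} :
    i ∈ Ival W ↔ W.min ≤ (i : Fin n) ∧ (i : WithBot (Fin n)) ≤ W.max := by
  simp [Ival]

lemma subset_Ival (W : Finset (Fin n)) : W ⊆ Ival W := fun i hi =>
  mem_Ival.2 ⟨Finset.min_le hi, Finset.le_max hi⟩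

lemma nested_trans {U V W : Finset (Fin n)} (h1 : Nested U V) (h2 : Nested V W) :
    Nested U W :=
  ⟨le_trans h2.1 h1.1, le_trans h1.2 h2.2⟩

lemma Ival_mono {V W : Finset (Fin n)} (h : Nested V W) : Ival V ⊆ Ival W := by
  intro i hi
  rw [mem_Ival] at hi ⊢
  exact ⟨le_trans h.1 hi.1, le_trans hi.2 h.2⟩

lemma Ival_eq_Icc {W : Finset (Fin n)} (h : W.Nonempty) :
    Ival W = Finset.Icc (W.min' h) (W.max' h) := by
  ext i
  rw [mem_Ival, Finset.mem_Icc, ← Finset.coe_min' h, ← Finset.coe_max' h,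
    WithTop.coe_le_coe, WithBot.coe_le_coe]

lemma min_Ival {W : Finset (Fin n)} (h : W.Nonempty) : (Ival W).min = W.min := by
  refine le_antisymm ?_ (Finset.le_min fun b hb => (mem_Ival.1 hb).1)
  rw [← Finset.coe_min' h]
  exact Finset.min_le (subset_Ival W (Finset.min'_mem W h))

lemma max_Ival {W : Finset (Fin n)} (h : W.Nonempty) : (Ival W).max = W.max := by
  refine le_antisymm (Finset.max_le fun b hb => (mem_Ival.1 hb).2) ?_
  rw [← Finset.coe_max' h]
  exact Finset.le_max (subset_Ival W (Finset.max'_mem W h))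

lemma nested_iff {W W' : Finset (Fin n)} (hW : W.Nonempty) (hW' : W'.Nonempty) :
    Nested W W' ↔ W'.min' hW' ≤ W.min' hW ∧ W.max' hW ≤ W'.max' hW' := by
  rw [Nested, ← Finset.coe_min' hW, ← Finset.coe_min' hW', ← Finset.coe_max' hW,
    ← Finset.coe_max' hW', WithTop.coe_le_coe, WithBot.coe_le_coe]

/-- Every block sits below an outer block. -/
lemma exists_outer (π : NCPart n) {B : Finset (Fin n)} (hB : B ∈ π.parts) :
    ∃ W, IsOuter π W ∧ Nested B W := by
  classical
  set S := π.parts.filter (fun W => Nested B W) with hS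
  have hBS : B ∈ S := by
    simp only [hS, Finset.mem_filter]
    exact ⟨hB, le_refl _, le_refl _⟩
  obtain ⟨W, hWS, hmax⟩ := S.exists_max_image (fun W => (Ival W).card) ⟨B, hBS⟩
  simp only [hS, Finset.mem_filter] at hWS
  obtain ⟨hWp, hBW⟩ := hWS
  refine ⟨W, ⟨hWp, ?_⟩, hBW⟩
  intro V hV hWV
  have hBV : Nested B V := nested_trans hBW hWV
  have hVS : V ∈ S := by simp only [hS, Finset.mem_filter]; exact ⟨hV, hBV⟩
  have hle : (Ival V).card ≤ (Ival W).card := hmax V hVS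
  have hsub : Ival W ⊆ Ival V := Ival_mono hWV
  have heq : Ival W = Ival V := Finset.eq_of_subset_of_card_le hsub hle
  have hWne : W.Nonempty := π.nonempty_of_mem_parts hWp
  have hVne : V.Nonempty := π.nonempty_of_mem_parts hV
  have hmin : V.min = W.min := by rw [← min_Ival hVne, ← min_Ival hWne, heq]
  have hmm : V.min' hVne = W.min' hWne := by
    have := hmin
    rw [← Finset.coe_min' hVne, ← Finset.coe_min' hWne] at this
    exact_mod_cast this
  refine π.eq_of_mem_parts hV hWp ?_ (Finset.min'_mem W hWne)
  rw [← hmm]; exact Finset.min'_mem V hVne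

lemma cross_aux {π : NCPart n} (hπ : IsNoncrossing π) {W W' : Finset (Fin n)}
    (hW : W ∈ π.parts) (hW' : W' ∈ π.parts) {a b c d : Fin n}
    (haW : a ∈ W) (hcW : c ∈ W) (hbW' : b ∈ W') (hdW' : d ∈ W')
    (h1 : a < b) (h2 : b ≤ c) (h3 : c < d) : W = W' := by
  rcases eq_or_lt_of_le h2 with h2' | h2'
  · exact π.eq_of_mem_parts hW hW' (h2' ▸ hcW) hbW'
  · obtain ⟨Bl, hBl, haBl, hbBl⟩ :=
      hπ a b c d h1 h2' h3 ⟨W, hW, haW, hcW⟩ ⟨W', hW', hbW', hdW'⟩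
    have hWBl : W = Bl := π.eq_of_mem_parts hW hBl haW haBl
    exact π.eq_of_mem_parts hW hW' (hWBl ▸ hbBl) hbW'

/-- Intervals of distinct outer blocks are disjoint. -/
lemma outer_Ival_eq {π : NCPart n} (hπ : IsNoncrossing π) {W W' : Finset (Fin n)}
    (hW : IsOuter π W) (hW' : IsOuter π W') {k : Fin n}
    (hk : k ∈ Ival W) (hk' : k ∈ Ival W') : W = W' := by
  have hWp := hW.1; have hW'p := hW'.1
  have hWne : W.Nonempty := π.nonempty_of_mem_parts hWp
  have hW'ne : W'.Nonempty := π.nonempty_of_mem_parts hW'p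
  rw [Ival_eq_Icc hWne, Finset.mem_Icc] at hk
  rw [Ival_eq_Icc hW'ne, Finset.mem_Icc] at hk'
  set a := W.min' hWne; set c := W.max' hWne
  set b := W'.min' hW'ne; set d := W'.max' hW'ne
  have haW : a ∈ W := Finset.min'_mem W hWne
  have hcW : c ∈ W := Finset.max'_mem W hWne
  have hbW' : b ∈ W' := Finset.min'_mem W' hW'ne
  have hdW' : d ∈ W' := Finset.max'_mem W' hW'ne
  rcases le_or_gt b a with h1 | h1 <;> rcases le_or_gt c d with h2 | h2
  · -- Nested W W'
    exact (hW.2 W' hW'p ((nested_iff hWne hW'ne).2 ⟨h1, h2⟩)).symm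
  · -- b ≤ a and d < c : crossing b a d c (or b = a)
    rcases eq_or_lt_of_le h1 with h1' | h1'
    · exact π.eq_of_mem_parts hWp hW'p (h1' ▸ haW) hbW'
    · exact (cross_aux hπ hW'p hWp hbW' hdW' haW hcW h1'
        (le_trans hk.1 hk'.2) h2).symm
  · -- a < b and c ≤ d : crossing a b c d (or c = d)
    rcases eq_or_lt_of_le h2 with h2' | h2'
    · exact π.eq_of_mem_parts hWp hW'p hcW (h2' ▸ hdW')
    · exact cross_aux hπ hWp hW'p haW hcW hbW' hdW' h1
        (le_trans hk'.1 hk.2) h2'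
  · -- Nested W' W
    exact hW'.2 W hWp ((nested_iff hW'ne hWne).2 ⟨le_of_lt h1, le_of_lt h2⟩)

end Aux

/-- The interval partitions are exactly the maximal elements of `(NC(n), ≪)`. -/
theorem intervalPart_iff_maximal (n : ℕ) (π : NCPart n) (hπ : IsNoncrossing π) :
    IsIntervalPart π ↔
      ∀ ρ : NCPart n, IsNoncrossing ρ → LL π ρ → ρ = π := by
  classical
  constructor
  · -- interval ⇒ maximal
    intro hInt ρ hρnc hLL
    have hsub : ρ.parts ⊆ π.parts := by
      intro W hW
      obtain ⟨V, hV, hVW, hmin, hmax⟩ := hLL.2 W hW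
      obtain ⟨i, j, hij, hVij⟩ := hInt V hV
      have hWV : W ⊆ V := by
        intro k hk
        have h1 : W.min ≤ (k : Fin n) := Finset.min_le hk
        have h2 : (k : WithBot (Fin n)) ≤ W.max := Finset.le_max hk
        rw [← hmin] at h1; rw [← hmax] at h2
        have hVne : V.Nonempty := π.nonempty_of_mem_parts hV
        rw [← Finset.coe_min' hVne] at h1
        rw [← Finset.coe_max' hVne] at h2
        have h1' : V.min' hVne ≤ k := by exact_mod_cast h1
        have h2' : k ≤ V.max' hVne := by exact_mod_cast h2
        have hmin' : V.min' hVne = i := by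
          have : i ∈ V := by rw [hVij]; exact Finset.mem_Icc.2 ⟨le_refl _, hij⟩
          refine le_antisymm (Finset.min'_le V i this) ?_
          have h : V.min' hVne ∈ Finset.Icc i j := by
            rw [← hVij]; exact Finset.min'_mem V hVne
          exact (Finset.mem_Icc.1 h).1
        have hmax' : V.max' hVne = j := by
          have : j ∈ V := by rw [hVij]; exact Finset.mem_Icc.2 ⟨hij, le_refl _⟩
          refine le_antisymm ?_ (Finset.le_max' V j this)
          have h : V.max' hVne ∈ Finset.Icc i j := by
            rw [← hVij]; exact Finset.max'_mem V hVne
          exact (Finset.mem_Icc.1 h).2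
        rw [hmin'] at h1'
        rw [hmax'] at h2'
        rw [hVij]
        exact Finset.mem_Icc.2 ⟨h1', h2'⟩
      have : W = V := le_antisymm hWV hVW
      exact this ▸ hV
    have hparts : ρ.parts = π.parts := by
      refine Finset.Subset.antisymm hsub ?_
      intro B hB
      obtain ⟨C, hC, hBC⟩ := hLL.1 B hB
      have hCπ : C ∈ π.parts := hsub hC
      obtain ⟨x, hx⟩ := π.nonempty_of_mem_parts hB
      have : B = C := π.eq_of_mem_parts hB hCπ hx (hBC hx)
      exact this ▸ hC
    exact Finpartition.ext hparts
  · -- maximal ⇒ interval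
    intro hmax
    by_contra hnot
    rw [IsIntervalPart] at hnot
    push_neg at hnot
    obtain ⟨B₀, hB₀, hB₀not⟩ := hnot
    -- build the interval partition of outer intervals
    have key : ∀ j : Fin n, ∃ W, IsOuter π W ∧ j ∈ Ival W := by
      intro j
      obtain ⟨B, hB, hjB⟩ := π.exists_mem (Finset.mem_univ j)
      obtain ⟨W, hWo, hBW⟩ := exists_outer π hB
      exact ⟨W, hWo, Ival_mono hBW (subset_Ival B hjB)⟩
    set P : Finset (Finset (Fin n)) :=
      (π.parts.filter (fun W => IsOuter π W)).image Ival with hP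
    have memP : ∀ {A : Finset (Fin n)}, A ∈ P ↔ ∃ W, IsOuter π W ∧ A = Ival W := by
      intro A
      simp only [hP, Finset.mem_image, Finset.mem_filter]
      constructor
      · rintro ⟨W, ⟨-, hWo⟩, rfl⟩; exact ⟨W, hWo, rfl⟩
      · rintro ⟨W, hWo, rfl⟩; exact ⟨W, ⟨hWo.1, hWo⟩, rfl⟩
    have hdisj : (P : Set (Finset (Fin n))).PairwiseDisjoint id := by
      intro A hA A' hA' hAA'
      obtain ⟨W, hWo, rfl⟩ := memP.1 hA
      obtain ⟨W', hW'o, rfl⟩ := memP.1 hA'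
      rw [Function.onFun, Finset.disjoint_left]
      intro k hk hk'
      exact hAA' (by rw [outer_Ival_eq hπ hWo hW'o hk hk'])
    set ρ : NCPart n :=
      ⟨P, Finset.supIndep_iff_pairwiseDisjoint.2 hdisj, by
        apply Finset.Subset.antisymm
        · intro j _
          exact Finset.mem_univ j
        · intro j _
          obtain ⟨W, hWo, hjW⟩ := key j
          exact Finset.mem_sup.2 ⟨Ival W, memP.2 ⟨W, hWo, rfl⟩, hjW⟩, by
        intro hbot
        obtain ⟨W, hWo, hW⟩ := memP.1 hbot
        obtain ⟨x, hx⟩ := π.nonempty_of_mem_parts hWo.1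
        have : x ∈ Ival W := subset_Ival W hx
        rw [← hW] at this
        exact absurd this (Finset.notMem_empty x)⟩ with hρ
    have hρparts : ρ.parts = P := rfl
    have hρnc : IsNoncrossing ρ := by
      intro i1 i2 i3 i4 h12 h23 h34 h13 _
      obtain ⟨A, hA, hi1, hi3⟩ := h13
      refine ⟨A, hA, hi1, ?_⟩
      rw [hρparts] at hA
      obtain ⟨W, hWo, rfl⟩ := memP.1 hA
      rw [mem_Ival] at hi1 hi3 ⊢
      exact ⟨le_trans hi1.1 (by exact_mod_cast le_of_lt h12),
        le_trans (by exact_mod_cast le_of_lt h23) hi3.2⟩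
    have hLL : LL π ρ := by
      constructor
      · intro B hB
        obtain ⟨W, hWo, hBW⟩ := exists_outer π hB
        exact ⟨Ival W, by rw [hρparts]; exact memP.2 ⟨W, hWo, rfl⟩,
          (subset_Ival B).trans (Ival_mono hBW)⟩
      · intro A hA
        rw [hρparts] at hA
        obtain ⟨W, hWo, rfl⟩ := memP.1 hA
        have hWne : W.Nonempty := π.nonempty_of_mem_parts hWo.1
        exact ⟨W, hWo.1, subset_Ival W, (min_Ival hWne).symm, (max_Ival hWne).symm⟩
    have hρπ : ρ = π := hmax ρ hρnc hLL
    -- but then B₀ is an interval: contradiction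
    have hB₀P : B₀ ∈ P := by rw [← hρparts, hρπ]; exact hB₀
    obtain ⟨W, hWo, rfl⟩ := memP.1 hB₀P
    have hWne : W.Nonempty := π.nonempty_of_mem_parts hWo.1
    exact absurd (Ival_eq_Icc hWne)
      (hB₀not (W.min' hWne) (W.max' hWne) (Finset.min'_le W _ (Finset.max'_mem W hWne)))
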